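/- Let z ∈ ℝ^d and let S be any set of s coordinates that contains the g coordinates of largest magnitude of z, where 1 ≤ g ≤ s ≤ d. Then ‖z_S‖₂² ≥ (1/⌈s/g⌉) · ‖z_{S'}‖₂² for every subset S' ⊆ [d] with |S'| ≤ s. Equivalently, such an S is a (δ, z)-DMO with δ = √(1/⌈s/g⌉). -/

import Mathlib

open scoped InnerProductSpace

noncomputable def restrict {d : ℕ} (z : EuclideanSpace ℝ (Fin d)) (S : Finset (Fin d)) :
    EuclideanSpace ℝ (Fin d) :=
  WithLp.toLp 2 fun i => if i ∈ S then z i else 0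

lemma restrict_norm_sq {d : ℕ} (z : EuclideanSpace ℝ (Fin d)) (S : Finset (Fin d)) :
    ‖restrict z S‖ ^ 2 = ∑ i ∈ S, (z i) ^ 2 := by
  rw [EuclideanSpace.norm_eq, Real.sq_sqrt (Finset.sum_nonneg fun i _ => by positivity)]
  have h : ∀ i : Fin d, ‖restrict z S i‖ ^ 2 = if i ∈ S then (z i) ^ 2 else 0 := by
    intro i
    simp only [restrict]
    split <;> simp [sq_abs]
  simp_rw [h]
  rw [Finset.sum_ite_mem, Finset.univ_inter]

/-- If `S` has `s` coordinates and contains a set `I` of `g` coordinates of largest magnitude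
of `z`, then `‖z_S‖² ≥ (1/⌈s/g⌉)·‖z_{S'}‖²` for every `S'` with `|S'| ≤ s`; i.e. `S` is a
`(δ, z)`-DMO with `δ = √(1/⌈s/g⌉)`. -/
theorem stmt3 {d : ℕ} (z : EuclideanSpace ℝ (Fin d)) (g s : ℕ)
    (hg : 1 ≤ g) (hgs : g ≤ s) (hsd : s ≤ d)
    (S : Finset (Fin d)) (hScard : S.card = s)
    (I : Finset (Fin d)) (hIcard : I.card = g) (hIS : I ⊆ S)
    (htop : ∀ i ∈ I, ∀ j ∉ I, |z j| ≤ |z i|) :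
    ∀ S' : Finset (Fin d), S'.card ≤ s →
      (1 / (⌈(s : ℝ) / (g : ℝ)⌉ : ℝ)) * ‖restrict z S'‖ ^ 2 ≤ ‖restrict z S‖ ^ 2 := by
  intro S' hS'
  rw [restrict_norm_sq, restrict_norm_sq]
  set k : ℝ := ((⌈(s : ℝ) / (g : ℝ)⌉ : ℤ) : ℝ) with hkdef
  have hg0 : (0 : ℝ) < g := by exact_mod_cast hg
  have hsg : (1 : ℝ) ≤ (s : ℝ) / (g : ℝ) := (one_le_div hg0).mpr (by exact_mod_cast hgs)
  have hk1 : (s : ℝ) / (g : ℝ) ≤ k := Int.le_ceil _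
  have hk0 : (0 : ℝ) < k := by linarith
  rw [one_div, inv_mul_le_iff₀ hk0]
  -- goal: ∑ S' ≤ k * ∑ S
  have hIne : I.Nonempty := Finset.card_pos.mp (by omega)
  obtain ⟨i₀, hi₀I, hmin⟩ := I.exists_min_image (fun i => (z i) ^ 2) hIne
  set m : ℝ := (z i₀) ^ 2 with hm
  have hm0 : (0 : ℝ) ≤ m := sq_nonneg _
  have hout : ∀ j ∉ I, (z j) ^ 2 ≤ m := by
    intro j hj
    have h1 := htop i₀ hi₀I j hj
    calc (z j) ^ 2 = |z j| ^ 2 := (sq_abs _).symm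
      _ ≤ |z i₀| ^ 2 := pow_le_pow_left₀ (abs_nonneg _) h1 2
      _ = m := sq_abs _
  set B : ℝ := ∑ i ∈ I, (z i) ^ 2 with hBdef
  have hB0 : (0 : ℝ) ≤ B := Finset.sum_nonneg fun i _ => sq_nonneg _
  have hgm : (g : ℝ) * m ≤ B := by
    have := Finset.card_nsmul_le_sum I (fun i => (z i) ^ 2) m (fun i hi => hmin i hi)
    simpa [hIcard, nsmul_eq_mul] using this
  have h1 : ∑ j ∈ S' \ I, (z j) ^ 2 ≤ ((S' \ I).card : ℝ) * m := by
    have := Finset.sum_le_card_nsmul (S' \ I) (fun j => (z j) ^ 2) m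
      (fun j hj => hout j (Finset.mem_sdiff.mp hj).2)
    simpa [nsmul_eq_mul] using this
  have h2 : ((I \ S').card : ℝ) * m ≤ ∑ i ∈ I \ S', (z i) ^ 2 := by
    have := Finset.card_nsmul_le_sum (I \ S') (fun i => (z i) ^ 2) m
      (fun i hi => hmin i (Finset.mem_sdiff.mp hi).1)
    simpa [nsmul_eq_mul] using this
  have hsplitS' : ∑ j ∈ S' ∩ I, (z j) ^ 2 + ∑ j ∈ S' \ I, (z j) ^ 2
      = ∑ j ∈ S', (z j) ^ 2 := Finset.sum_inter_add_sum_sdiff _ _ _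
  have hsplitI : ∑ i ∈ I ∩ S', (z i) ^ 2 + ∑ i ∈ I \ S', (z i) ^ 2 = B :=
    Finset.sum_inter_add_sum_sdiff _ _ _
  have hintcomm : ∑ j ∈ S' ∩ I, (z j) ^ 2 = ∑ i ∈ I ∩ S', (z i) ^ 2 := by
    rw [Finset.inter_comm]
  have hc1 : ((S' \ I).card : ℝ) + ((S' ∩ I).card : ℝ) = (S'.card : ℝ) := by
    exact_mod_cast Finset.card_sdiff_add_card_inter S' I
  have hc2 : ((I \ S').card : ℝ) + ((I ∩ S').card : ℝ) = (g : ℝ) := by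
    have := Finset.card_sdiff_add_card_inter I S'
    rw [hIcard] at this
    exact_mod_cast this
  have hcinter : ((S' ∩ I).card : ℝ) = ((I ∩ S').card : ℝ) := by
    rw [Finset.inter_comm]
  have hS'r : (S'.card : ℝ) ≤ (s : ℝ) := by exact_mod_cast hS'
  -- card bound: (S'\I).card * m ≤ (I\S').card * m + (s - g) * m
  have hcards : ((S' \ I).card : ℝ) * m ≤ ((I \ S').card : ℝ) * m + ((s : ℝ) - g) * m := by
    nlinarith [hm0]
  -- A ≤ B + (s - g) * m
  have hA : ∑ j ∈ S', (z j) ^ 2 ≤ B + ((s : ℝ) - g) * m := by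
    have e1 : ∑ i ∈ I ∩ S', (z i) ^ 2 = B - ∑ i ∈ I \ S', (z i) ^ 2 := by linarith
    have e2 : ∑ j ∈ S', (z j) ^ 2
        = B - ∑ i ∈ I \ S', (z i) ^ 2 + ∑ j ∈ S' \ I, (z j) ^ 2 := by
      rw [← hsplitS', hintcomm, e1]
    linarith
  -- (s - g) * m ≤ (s/g - 1) * B
  have hsgr : (0 : ℝ) ≤ (s : ℝ) - g := by
    have : (g : ℝ) ≤ (s : ℝ) := by exact_mod_cast hgs
    linarith
  have h3 : ((s : ℝ) - g) * m ≤ ((s : ℝ) / g - 1) * B := by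
    have key : ((s : ℝ) - g) / g * ((g : ℝ) * m) ≤ ((s : ℝ) - g) / g * B :=
      mul_le_mul_of_nonneg_left hgm (by positivity)
    have hgne : (g : ℝ) ≠ 0 := ne_of_gt hg0
    have e1 : ((s : ℝ) - g) / g * ((g : ℝ) * m) = ((s : ℝ) - g) * m := by
      field_simp
    have e2 : ((s : ℝ) - g) / g * B = ((s : ℝ) / g - 1) * B := by
      field_simp
    rw [e1, e2] at key
    exact key
  have hsum : ∑ j ∈ S', (z j) ^ 2 ≤ ((s : ℝ) / g) * B := by
    have : B + ((s : ℝ) / g - 1) * B = ((s : ℝ) / g) * B := by ring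
    linarith
  have hBS : B ≤ ∑ i ∈ S, (z i) ^ 2 :=
    Finset.sum_le_sum_of_subset_of_nonneg hIS (fun i _ _ => sq_nonneg _)
  calc ∑ j ∈ S', (z j) ^ 2 ≤ ((s : ℝ) / g) * B := hsum
    _ ≤ k * B := mul_le_mul_of_nonneg_right hk1 hB0
    _ ≤ k * ∑ i ∈ S, (z i) ^ 2 := mul_le_mul_of_nonneg_left hBS (le_of_lt hk0)
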